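/- Let H be a finite-dimensional Hilbert space with a family of orthogonal projectors P_1,…,P_N satisfying P_i P_j = δ_{ij} P_i and ∑_j P_j = I. Let U be a unitary operator on H, set U_{jk} = P_j U P_k and c(U) = max_{j,k} ‖U_{jk}‖. Then for any normalized Ψ ∈ H, defining h(Ψ) = -∑_j ‖P_j Ψ‖² log ‖P_j Ψ‖², one has h(UΨ) + h(Ψ) ≥ -2 log c(U). -/

import Mathlib

open scoped BigOperators



open Complex ContinuousLinearMap

section proj
variable {H : Type*} [NormedAddCommGroup H] [InnerProductSpace ℂ H] [FiniteDimensional ℂ H]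
  {N : ℕ} {P : Fin N → (H →L[ℂ] H)}

local notation "⟪" x ", " y "⟫" => @inner ℂ _ _ x y

lemma aux_adj (hsa : ∀ i, IsSelfAdjoint (P i)) (i : Fin N) :
    ContinuousLinearMap.adjoint (P i) = P i := by
  have := (hsa i).star_eq
  rwa [ContinuousLinearMap.star_eq_adjoint] at this

lemma aux_inner_proj_left (hsa : ∀ i, IsSelfAdjoint (P i)) (i : Fin N) (x y : H) :
    ⟪P i x, y⟫ = ⟪x, P i y⟫ := by
  have h := ContinuousLinearMap.adjoint_inner_left (𝕜 := ℂ) (P i) y x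
  rwa [aux_adj hsa i] at h

lemma aux_proj_proj (horth : ∀ i j, (P i).comp (P j) = if i = j then P i else 0)
    (i j : Fin N) (x : H) : P i (P j x) = if i = j then P i x else 0 := by
  have := congrArg (fun T => T x) (horth i j)
  simpa [ContinuousLinearMap.comp_apply] using
    (by split_ifs with h <;> simpa [h] using this : P i (P j x) = if i = j then P i x else 0)

lemma aux_sum_proj (hsum : ∑ i, P i = ContinuousLinearMap.id ℂ H) (x : H) :
    ∑ i, P i x = x := by
  have := congrArg (fun T => T x) hsum
  simpa using this

end proj

section proj2
variable {H : Type*} [NormedAddCommGroup H] [InnerProductSpace ℂ H] [FiniteDimensional ℂ H]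
  {N : ℕ} {P : Fin N → (H →L[ℂ] H)}

local notation "⟪" x ", " y "⟫" => @inner ℂ _ _ x y

lemma aux_inner_PP (hsa : ∀ i, IsSelfAdjoint (P i))
    (horth : ∀ i j, (P i).comp (P j) = if i = j then P i else 0)
    (i j : Fin N) (x y : H) :
    ⟪P i x, P j y⟫ = if i = j then ⟪P i x, P i y⟫ else 0 := by
  rw [aux_inner_proj_left hsa i x (P j y), aux_proj_proj horth i j y]
  split_ifs with h
  · subst h
    rw [aux_inner_proj_left hsa i x (P i y), aux_proj_proj horth i i y, if_pos rfl]
  · simp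

lemma aux_sum_smul_norm_sq (hsa : ∀ i, IsSelfAdjoint (P i))
    (horth : ∀ i j, (P i).comp (P j) = if i = j then P i else 0)
    (x : Fin N → ℂ) (u : H) :
    ‖∑ j, x j • P j u‖ ^ 2 = ∑ j, ‖x j‖ ^ 2 * ‖P j u‖ ^ 2 := by
  have key : (⟪∑ i, x i • P i u, ∑ j, x j • P j u⟫ : ℂ)
      = ((∑ j, ‖x j‖ ^ 2 * ‖P j u‖ ^ 2 : ℝ) : ℂ) := by
    rw [sum_inner]
    push_cast
    refine Finset.sum_congr rfl fun i _ => ?_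
    rw [inner_sum]
    have : ∀ j, ⟪x i • P i u, x j • P j u⟫
        = if i = j then (starRingEnd ℂ) (x i) * x i * ⟪P i u, P i u⟫ else 0 := by
      intro j
      rw [inner_smul_left, inner_smul_right, aux_inner_PP hsa horth]
      split_ifs with h
      · subst h; ring
      · simp
    simp only [this, Finset.sum_ite_eq, Finset.mem_univ, if_true]
    rw [Complex.conj_mul', @inner_self_eq_norm_sq_to_K ℂ]
    rfl
  have h2 := congrArg Complex.re key
  simp only [Complex.ofReal_re] at h2
  rw [← @inner_self_eq_norm_sq ℂ]
  exact h2

end proj2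

section proj3
variable {H : Type*} [NormedAddCommGroup H] [InnerProductSpace ℂ H] [FiniteDimensional ℂ H]
  {N : ℕ} {P : Fin N → (H →L[ℂ] H)}

local notation "⟪" x ", " y "⟫" => @inner ℂ _ _ x y

lemma aux_sum_norm_proj_sq (hsa : ∀ i, IsSelfAdjoint (P i))
    (horth : ∀ i j, (P i).comp (P j) = if i = j then P i else 0)
    (hsum : ∑ i, P i = ContinuousLinearMap.id ℂ H) (u : H) :
    ∑ k, ‖P k u‖ ^ 2 = ‖u‖ ^ 2 := by
  have h := aux_sum_smul_norm_sq hsa horth (fun _ => (1:ℂ)) u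
  simp only [one_smul, norm_one, one_pow, one_mul] at h
  rw [aux_sum_proj hsum u] at h
  exact h.symm

lemma aux_sum_smul_norm_le (hsa : ∀ i, IsSelfAdjoint (P i))
    (horth : ∀ i j, (P i).comp (P j) = if i = j then P i else 0)
    (hsum : ∑ i, P i = ContinuousLinearMap.id ℂ H)
    (x : Fin N → ℂ) (hx : ∀ j, ‖x j‖ ≤ 1) (u : H) :
    ‖∑ j, x j • P j u‖ ≤ ‖u‖ := by
  have h1 := aux_sum_smul_norm_sq hsa horth x u
  have h2 : ∑ j, ‖x j‖ ^ 2 * ‖P j u‖ ^ 2 ≤ ∑ j, ‖P j u‖ ^ 2 :=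
    Finset.sum_le_sum fun j _ => by
      have hx2 : ‖x j‖ ^ 2 ≤ 1 := by nlinarith [hx j, norm_nonneg (x j)]
      calc ‖x j‖ ^ 2 * ‖P j u‖ ^ 2 ≤ 1 * ‖P j u‖ ^ 2 :=
            mul_le_mul_of_nonneg_right hx2 (sq_nonneg _)
        _ = ‖P j u‖ ^ 2 := one_mul _
  have h3 : ‖∑ j, x j • P j u‖ ^ 2 ≤ ‖u‖ ^ 2 := by
    rw [h1, ← aux_sum_norm_proj_sq hsa horth hsum u]; exact h2
  calc ‖∑ j, x j • P j u‖ = Real.sqrt (‖∑ j, x j • P j u‖ ^ 2) :=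
        (Real.sqrt_sq (norm_nonneg _)).symm
    _ ≤ Real.sqrt (‖u‖ ^ 2) := Real.sqrt_le_sqrt h3
    _ = ‖u‖ := Real.sqrt_sq (norm_nonneg _)

lemma aux_U_norm {U : H →L[ℂ] H}
    (hU2 : (ContinuousLinearMap.adjoint U).comp U = ContinuousLinearMap.id ℂ H) (x : H) :
    ‖U x‖ = ‖x‖ := by
  have hadj : ContinuousLinearMap.adjoint U (U x) = x := by
    have := congrArg (fun T => T x) hU2; simpa using this
  have h : (⟪x, ContinuousLinearMap.adjoint U (U x)⟫ : ℂ) = ⟪U x, U x⟫ :=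
    ContinuousLinearMap.adjoint_inner_right (𝕜 := ℂ) U x (U x)
  rw [hadj] at h
  have h2 : ‖U x‖ ^ 2 = ‖x‖ ^ 2 := by
    have := congrArg (fun z : ℂ => RCLike.re z) h
    rw [@inner_self_eq_norm_sq ℂ, @inner_self_eq_norm_sq ℂ] at this
    exact this.symm
  calc ‖U x‖ = Real.sqrt (‖U x‖ ^ 2) := (Real.sqrt_sq (norm_nonneg _)).symm
    _ = Real.sqrt (‖x‖ ^ 2) := by rw [h2]
    _ = ‖x‖ := Real.sqrt_sq (norm_nonneg _)

end proj3

section proj4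
variable {H : Type*} [NormedAddCommGroup H] [InnerProductSpace ℂ H] [FiniteDimensional ℂ H]
  {N : ℕ} {P : Fin N → (H →L[ℂ] H)}

local notation "⟪" x ", " y "⟫" => @inner ℂ _ _ x y

lemma aux_proj_idem (horth : ∀ i j, (P i).comp (P j) = if i = j then P i else 0)
    (i : Fin N) (y : H) : P i (P i y) = P i y := by
  simpa using aux_proj_proj horth i i y

lemma aux_inner_proj_self (hsa : ∀ i, IsSelfAdjoint (P i))
    (horth : ∀ i j, (P i).comp (P j) = if i = j then P i else 0)
    (i : Fin N) (y : H) : ⟪P i y, y⟫ = ((‖P i y‖ ^ 2 : ℝ) : ℂ) := by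
  have h2 := aux_inner_proj_left hsa i (P i y) y
  rw [aux_proj_idem horth i y] at h2
  rw [h2, @inner_self_eq_norm_sq_to_K ℂ]
  norm_cast

lemma aux_inner_proj_self' (hsa : ∀ i, IsSelfAdjoint (P i))
    (horth : ∀ i j, (P i).comp (P j) = if i = j then P i else 0)
    (i : Fin N) (y : H) : ⟪y, P i y⟫ = ((‖P i y‖ ^ 2 : ℝ) : ℂ) := by
  rw [← inner_conj_symm, aux_inner_proj_self hsa horth i y]
  exact Complex.conj_ofReal _

lemma aux_U_inner {U : H →L[ℂ] H}
    (hU2 : (ContinuousLinearMap.adjoint U).comp U = ContinuousLinearMap.id ℂ H) (x y : H) :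
    ⟪U x, U y⟫ = ⟪x, y⟫ := by
  have hadj : ContinuousLinearMap.adjoint U (U y) = y := by
    have := congrArg (fun T => T y) hU2; simpa using this
  have h := ContinuousLinearMap.adjoint_inner_right (𝕜 := ℂ) U x (U y)
  rw [hadj] at h
  exact h.symm

end proj4

open Set Filter Topology

lemma aux_deriv_nonneg {φ : ℝ → ℝ} {d : ℝ} (h0 : φ 0 = 0)
    (hd : HasDerivAt φ d 0) (hpos : ∀ t ∈ Set.Ioc (0:ℝ) (1/2), 0 ≤ φ t) : 0 ≤ d := by
  have h := (hd.hasDerivWithinAt (s := Set.Ioi 0))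
  rw [hasDerivWithinAt_iff_tendsto_slope] at h
  have hset : Set.Ioi (0:ℝ) \ {0} = Set.Ioi 0 := by
    ext x; simp (config := {contextual := true}) [le_of_lt, ne_of_gt]
  rw [hset] at h
  refine ge_of_tendsto h ?_
  filter_upwards [Ioc_mem_nhdsGT_of_mem (by norm_num : (0:ℝ) ∈ Set.Ico (0:ℝ) (1/2))] with t ht
  rw [slope_def_field, h0, sub_zero, sub_zero]
  exact div_nonneg (hpos t ht) (le_of_lt ht.1)

section proj5
variable {H : Type*} [NormedAddCommGroup H] [InnerProductSpace ℂ H] [FiniteDimensional ℂ H]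
  {N : ℕ} {P : Fin N → (H →L[ℂ] H)}

local notation "⟪" x ", " y "⟫" => @inner ℂ _ _ x y

lemma aux_inner_proj_both (hsa : ∀ i, IsSelfAdjoint (P i))
    (horth : ∀ i j, (P i).comp (P j) = if i = j then P i else 0)
    (i : Fin N) (x y : H) : ⟪P i x, y⟫ = ⟪P i x, P i y⟫ := by
  rw [aux_inner_proj_left hsa i x y, aux_inner_proj_left hsa i x (P i y),
    aux_proj_idem horth i y]

end proj5

set_option maxHeartbeats 1000000

open Complex

/-- **Vectorial Entropic Uncertainty Principle**: given a resolution of the identity by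
mutually orthogonal projectors `P_1, …, P_N` on a finite-dimensional Hilbert space `H`,
a unitary `U`, and `c(U) = max_{j,k} ‖P_j U P_k‖`, any normalized `Ψ ∈ H` satisfies
`h(UΨ) + h(Ψ) ≥ -2 log c(U)`, where `h(Ψ) = -∑_j ‖P_j Ψ‖² log ‖P_j Ψ‖²`. -/
theorem vectorial_entropic_uncertainty_principle
    {H : Type*} [NormedAddCommGroup H] [InnerProductSpace ℂ H] [FiniteDimensional ℂ H]
    {N : ℕ} (P : Fin N → (H →L[ℂ] H))
    (hsa : ∀ i, IsSelfAdjoint (P i))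
    (horth : ∀ i j, (P i).comp (P j) = if i = j then P i else 0)
    (hsum : ∑ i, P i = ContinuousLinearMap.id ℂ H)
    (U : H →L[ℂ] H)
    (hU1 : U.comp (ContinuousLinearMap.adjoint U) = ContinuousLinearMap.id ℂ H)
    (hU2 : (ContinuousLinearMap.adjoint U).comp U = ContinuousLinearMap.id ℂ H)
    (c : ℝ) (hc : IsGreatest {x : ℝ | ∃ j k, x = ‖(P j).comp (U.comp (P k))‖} c)
    (Ψ : H) (hΨ : ‖Ψ‖ = 1) :
    -2 * Real.log c ≤
      (-∑ j, ‖P j (U Ψ)‖ ^ 2 * Real.log (‖P j (U Ψ)‖ ^ 2)) +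
        (-∑ j, ‖P j Ψ‖ ^ 2 * Real.log (‖P j Ψ‖ ^ 2)) := by
  classical
  set a : Fin N → ℝ := fun k => ‖P k Ψ‖ with ha_def
  set b : Fin N → ℝ := fun j => ‖P j (U Ψ)‖ with hb_def
  have hUΨ : ‖U Ψ‖ = 1 := by rw [aux_U_norm hU2, hΨ]
  have hsum_a : ∑ k, a k ^ 2 = 1 := by
    rw [ha_def]; simp only []; rw [aux_sum_norm_proj_sq hsa horth hsum Ψ, hΨ]; norm_num
  have hsum_b : ∑ j, b j ^ 2 = 1 := by
    rw [hb_def]; simp only []; rw [aux_sum_norm_proj_sq hsa horth hsum (U Ψ), hUΨ]; norm_num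
  have ha_nonneg : ∀ k, 0 ≤ a k := fun k => norm_nonneg _
  have hb_nonneg : ∀ j, 0 ≤ b j := fun j => norm_nonneg _
  have ha_le1 : ∀ k, a k ≤ 1 := by
    intro k
    have h1 : a k ^ 2 ≤ 1 := by
      rw [← hsum_a]
      exact Finset.single_le_sum (fun i _ => sq_nonneg (a i)) (Finset.mem_univ k)
    nlinarith [ha_nonneg k]
  have hb_le1 : ∀ j, b j ≤ 1 := by
    intro j
    have h1 : b j ^ 2 ≤ 1 := by
      rw [← hsum_b]
      exact Finset.single_le_sum (fun i _ => sq_nonneg (b i)) (Finset.mem_univ j)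
    nlinarith [hb_nonneg j]
  -- entropy sums are nonnegative
  have hE_nonneg : 0 ≤ (-∑ j, b j ^ 2 * Real.log (b j ^ 2)) +
      (-∑ k, a k ^ 2 * Real.log (a k ^ 2)) := by
    have h1 : ∑ j, b j ^ 2 * Real.log (b j ^ 2) ≤ 0 :=
      Finset.sum_nonpos fun j _ => mul_nonpos_of_nonneg_of_nonpos (sq_nonneg _)
        (Real.log_nonpos (sq_nonneg _) (by nlinarith [hb_le1 j, hb_nonneg j]))
    have h2 : ∑ k, a k ^ 2 * Real.log (a k ^ 2) ≤ 0 :=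
      Finset.sum_nonpos fun k _ => mul_nonpos_of_nonneg_of_nonpos (sq_nonneg _)
        (Real.log_nonpos (sq_nonneg _) (by nlinarith [ha_le1 k, ha_nonneg k]))
    linarith
  obtain ⟨j0, k0, hcval⟩ := hc.1
  have hc_nonneg : 0 ≤ c := hcval ▸ norm_nonneg _
  rcases eq_or_lt_of_le hc_nonneg with hc0 | hcpos
  · rw [← hc0, Real.log_zero]
    simpa using hE_nonneg
  -- main case : c > 0
  set M : Fin N → Fin N → ℂ := fun j k => @inner ℂ _ _ (P j (U Ψ)) (U (P k Ψ)) with hM_def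
  have hMrow : ∀ j, ∑ k, M j k = ((b j ^ 2 : ℝ) : ℂ) := by
    intro j
    simp only [hM_def]
    rw [← inner_sum, ← map_sum, aux_sum_proj hsum]
    exact aux_inner_proj_self hsa horth j (U Ψ)
  have hMcol : ∀ k, ∑ j, M j k = ((a k ^ 2 : ℝ) : ℂ) := by
    intro k
    simp only [hM_def]
    have h1 : ∀ j, (@inner ℂ _ _ (P j (U Ψ)) (U (P k Ψ)) : ℂ)
        = @inner ℂ _ _ (U Ψ) (P j (U (P k Ψ))) :=
      fun j => aux_inner_proj_left hsa j (U Ψ) (U (P k Ψ))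
    simp only [h1]
    rw [← inner_sum, aux_sum_proj hsum, aux_U_inner hU2]
    exact aux_inner_proj_self' hsa horth k Ψ
  have hMbd : ∀ j k, ‖M j k‖ ≤ b j * c * a k := by
    intro j k
    have h1 : M j k = @inner ℂ _ _ (P j (U Ψ)) (((P j).comp (U.comp (P k))) (P k Ψ)) := by
      simp only [hM_def, ContinuousLinearMap.comp_apply]
      rw [aux_proj_idem horth k Ψ]
      exact aux_inner_proj_both hsa horth j (U Ψ) (U (P k Ψ))
    have hTc : ‖(P j).comp (U.comp (P k))‖ ≤ c := hc.2 ⟨j, k, rfl⟩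
    calc ‖M j k‖ ≤ ‖P j (U Ψ)‖ * ‖((P j).comp (U.comp (P k))) (P k Ψ)‖ := by
          rw [h1]; exact norm_inner_le_norm _ _
      _ ≤ ‖P j (U Ψ)‖ * (‖(P j).comp (U.comp (P k))‖ * ‖P k Ψ‖) :=
          mul_le_mul_of_nonneg_left (ContinuousLinearMap.le_opNorm _ _) (norm_nonneg _)
      _ ≤ b j * c * a k := by
          rw [mul_assoc]
          exact mul_le_mul_of_nonneg_left
            (mul_le_mul_of_nonneg_right hTc (ha_nonneg k)) (hb_nonneg j)
  have hbil : ∀ x y : Fin N → ℂ,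
      ∑ j, ∑ k, (x j * y k) * M j k
        = @inner ℂ _ _ (∑ j, (starRingEnd ℂ) (x j) • P j (U Ψ)) (U (∑ k, y k • P k Ψ)) := by
    intro x y
    simp only [hM_def]
    have hUsum : U (∑ k, y k • P k Ψ) = ∑ k, y k • U (P k Ψ) := by
      rw [map_sum]
      exact Finset.sum_congr rfl fun k _ => by rw [map_smul]
    rw [hUsum, sum_inner]
    refine Finset.sum_congr rfl fun j _ => ?_
    rw [inner_smul_left, inner_sum, Finset.mul_sum]
    refine Finset.sum_congr rfl fun k _ => ?_
    rw [inner_smul_right, Complex.conj_conj]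
    ring
  set w : Fin N → Fin N → ℝ := fun j k => 2 * Real.log (b j) + 2 * Real.log (a k) with hw_def
  set F : ℂ → ℂ := fun z => ∑ j, ∑ k, Complex.exp (z * (w j k : ℂ)) * M j k with hF_def
  have hF0 : F 0 = 1 := by
    simp only [hF_def, zero_mul, Complex.exp_zero, one_mul]
    have h1 : ∑ j, ∑ k, M j k = ∑ j, ((b j ^ 2 : ℝ) : ℂ) :=
      Finset.sum_congr rfl fun j _ => hMrow j
    rw [h1]
    exact_mod_cast congrArg Complex.ofReal hsum_b
  have hFdiff : Differentiable ℂ F := by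
    rw [hF_def]
    refine Differentiable.fun_sum fun j _ => Differentiable.fun_sum fun k _ => ?_
    exact ((differentiable_id.mul_const _).cexp).mul_const _
  have hFderiv : HasDerivAt F (∑ j, ∑ k, ((w j k : ℝ) : ℂ) * M j k) 0 := by
    have hterm : ∀ (j k : Fin N),
        HasDerivAt (fun z : ℂ => Complex.exp (z * (w j k : ℂ)) * M j k)
          (((w j k : ℝ) : ℂ) * M j k) 0 := by
      intro j k
      have h1 : HasDerivAt (fun z : ℂ => z * ((w j k : ℝ) : ℂ)) ((w j k : ℝ) : ℂ) 0 := by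
        simpa using (hasDerivAt_id (0 : ℂ)).mul_const (((w j k : ℝ)) : ℂ)
      have h2 := h1.cexp
      simp only [zero_mul, Complex.exp_zero, one_mul] at h2
      exact h2.mul_const _
    rw [hF_def]
    exact HasDerivAt.fun_sum fun j _ => HasDerivAt.fun_sum fun k _ => hterm j k
  have hDre : (∑ j, ∑ k, ((w j k : ℝ) : ℂ) * M j k)
      = ((∑ j, b j ^ 2 * Real.log (b j ^ 2) + ∑ k, a k ^ 2 * Real.log (a k ^ 2) : ℝ) : ℂ) := by
    have hreal : (∑ j, b j ^ 2 * Real.log (b j ^ 2) + ∑ k, a k ^ 2 * Real.log (a k ^ 2))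
        = ∑ j, 2 * Real.log (b j) * b j ^ 2 + ∑ k, 2 * Real.log (a k) * a k ^ 2 := by
      congr 1 <;> refine Finset.sum_congr rfl fun i _ => ?_ <;>
        rw [Real.log_pow] <;> push_cast <;> ring
    have hsplit : ∀ (j k : Fin N), ((w j k : ℝ) : ℂ) * M j k
        = ((2 * Real.log (b j) : ℝ) : ℂ) * M j k + ((2 * Real.log (a k) : ℝ) : ℂ) * M j k := by
      intro j k
      rw [hw_def]
      push_cast
      ring
    calc ∑ j, ∑ k, ((w j k : ℝ) : ℂ) * M j k
        = ∑ j, ∑ k, ((2 * Real.log (b j) : ℝ) : ℂ) * M j k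
          + ∑ j, ∑ k, ((2 * Real.log (a k) : ℝ) : ℂ) * M j k := by
          simp only [hsplit, Finset.sum_add_distrib]
      _ = ∑ j, ((2 * Real.log (b j) : ℝ) : ℂ) * ((b j ^ 2 : ℝ) : ℂ)
          + ∑ k, ((2 * Real.log (a k) : ℝ) : ℂ) * ((a k ^ 2 : ℝ) : ℂ) := by
          congr 1
          · refine Finset.sum_congr rfl fun j _ => ?_
            rw [← Finset.mul_sum, hMrow j]
          · rw [Finset.sum_comm]
            refine Finset.sum_congr rfl fun k _ => ?_
            rw [← Finset.mul_sum, hMcol k]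
      _ = _ := by
          rw [hreal]
          norm_cast
  have hnorm_exp : ∀ (z : ℂ) (r : ℝ), ‖Complex.exp (z * (r : ℂ))‖ = Real.exp (z.re * r) := by
    intro z r
    rw [Complex.norm_exp]
    congr 1
    simp [Complex.mul_re]
  have hbound0 : ∀ z : ℂ, z.re = 0 → ‖F z‖ ≤ 1 := by
    intro z hz
    set x : Fin N → ℂ := fun j => Complex.exp (z * ((2 * Real.log (b j) : ℝ) : ℂ)) with hx_def
    set y : Fin N → ℂ := fun k => Complex.exp (z * ((2 * Real.log (a k) : ℝ) : ℂ)) with hy_def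
    have hx1 : ∀ j, ‖x j‖ ≤ 1 := by
      intro j
      rw [hx_def]
      simp only []
      rw [hnorm_exp, hz]
      simp
    have hy1 : ∀ k, ‖y k‖ ≤ 1 := by
      intro k
      rw [hy_def]
      simp only []
      rw [hnorm_exp, hz]
      simp
    have hFz : F z = ∑ j, ∑ k, (x j * y k) * M j k := by
      simp only [hF_def, hx_def, hy_def]
      refine Finset.sum_congr rfl fun j _ => Finset.sum_congr rfl fun k _ => ?_
      rw [← Complex.exp_add]
      congr 2
      rw [hw_def]
      push_cast
      ring
    rw [hFz, hbil x y]
    have hL : ‖∑ j, (starRingEnd ℂ) (x j) • P j (U Ψ)‖ ≤ 1 := by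
      have h := aux_sum_smul_norm_le hsa horth hsum (fun j => (starRingEnd ℂ) (x j))
        (fun j => by rw [RCLike.norm_conj]; exact hx1 j) (U Ψ)
      rwa [hUΨ] at h
    have hR : ‖U (∑ k, y k • P k Ψ)‖ ≤ 1 := by
      rw [aux_U_norm hU2]
      have h := aux_sum_smul_norm_le hsa horth hsum y hy1 Ψ
      rwa [hΨ] at h
    calc ‖(@inner ℂ _ _ (∑ j, (starRingEnd ℂ) (x j) • P j (U Ψ)) (U (∑ k, y k • P k Ψ)) : ℂ)‖
        ≤ ‖∑ j, (starRingEnd ℂ) (x j) • P j (U Ψ)‖ * ‖U (∑ k, y k • P k Ψ)‖ :=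
          norm_inner_le_norm _ _
      _ ≤ 1 * 1 := mul_le_mul hL hR (norm_nonneg _) zero_le_one
      _ = 1 := one_mul 1
  have hw_nonpos : ∀ (j k : Fin N), w j k ≤ 0 := by
    intro j k
    simp only [hw_def]
    have h1 := Real.log_nonpos (hb_nonneg j) (hb_le1 j)
    have h2 := Real.log_nonpos (ha_nonneg k) (ha_le1 k)
    linarith
  have hbound1 : ∀ z : ℂ, z.re = 1/2 → ‖F z‖ ≤ c := by
    intro z hz
    have hterm : ∀ (j k : Fin N),
        ‖Complex.exp (z * ((w j k : ℝ) : ℂ)) * M j k‖ ≤ c * (b j ^ 2 * a k ^ 2) := by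
      intro j k
      rw [norm_mul, hnorm_exp, hz]
      rcases eq_or_lt_of_le (hb_nonneg j) with hbj | hbj
      · have hM0 : ‖M j k‖ ≤ 0 := by
          have h := hMbd j k
          rw [← hbj] at h
          simpa using h
        have h1 : Real.exp (1/2 * w j k) * ‖M j k‖ ≤ 0 :=
          mul_nonpos_of_nonneg_of_nonpos (Real.exp_nonneg _) hM0
        have h2 : 0 ≤ c * (b j ^ 2 * a k ^ 2) := by positivity
        linarith
      rcases eq_or_lt_of_le (ha_nonneg k) with hak | hak
      · have hM0 : ‖M j k‖ ≤ 0 := by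
          have h := hMbd j k
          rw [← hak] at h
          simpa using h
        have h1 : Real.exp (1/2 * w j k) * ‖M j k‖ ≤ 0 :=
          mul_nonpos_of_nonneg_of_nonpos (Real.exp_nonneg _) hM0
        have h2 : 0 ≤ c * (b j ^ 2 * a k ^ 2) := by positivity
        linarith
      · have hexp_eq : Real.exp (1/2 * w j k) = b j * a k := by
          rw [hw_def]
          have : (1:ℝ)/2 * (2 * Real.log (b j) + 2 * Real.log (a k))
              = Real.log (b j) + Real.log (a k) := by ring
          rw [this, Real.exp_add, Real.exp_log hbj, Real.exp_log hak]
        rw [hexp_eq]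
        calc b j * a k * ‖M j k‖ ≤ b j * a k * (b j * c * a k) :=
              mul_le_mul_of_nonneg_left (hMbd j k) (by positivity)
          _ = c * (b j ^ 2 * a k ^ 2) := by ring
    calc ‖F z‖ ≤ ∑ j, ‖∑ k, Complex.exp (z * ((w j k : ℝ) : ℂ)) * M j k‖ := by
          rw [hF_def]; exact norm_sum_le _ _
      _ ≤ ∑ j, ∑ k, ‖Complex.exp (z * ((w j k : ℝ) : ℂ)) * M j k‖ :=
          Finset.sum_le_sum fun j _ => norm_sum_le _ _
      _ ≤ ∑ j, ∑ k, c * (b j ^ 2 * a k ^ 2) :=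
          Finset.sum_le_sum fun j _ => Finset.sum_le_sum fun k _ => hterm j k
      _ = c := by
          have h1 : ∀ j : Fin N, ∑ k, c * (b j ^ 2 * a k ^ 2) = c * b j ^ 2 := by
            intro j
            have : ∀ k : Fin N, c * (b j ^ 2 * a k ^ 2) = c * b j ^ 2 * a k ^ 2 := by
              intro k; ring
            simp only [this]
            rw [← Finset.mul_sum, hsum_a, mul_one]
          simp only [h1]
          rw [← Finset.mul_sum, hsum_b, mul_one]
  have hinterp : ∀ t : ℝ, t ∈ Set.Ioc (0:ℝ) (1/2) → ‖F (t:ℂ)‖ ≤ Real.exp (2 * Real.log c * t) := by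
    intro t ht
    set G : ℂ → ℂ := fun z => F (z * (((2:ℝ)⁻¹ : ℝ) : ℂ)) with hG_def
    have hGdiff : Differentiable ℂ G := hFdiff.comp (differentiable_id.mul_const _)
    have hGd : DiffContOnCl ℂ G (Complex.HadamardThreeLines.verticalStrip 0 1) :=
      hGdiff.diffContOnCl
    have hGbound : ∀ z : ℂ, z.re ∈ Set.Icc (0:ℝ) 1 → ‖G z‖ ≤ ∑ j, ∑ k, ‖M j k‖ := by
      intro z hzre
      have hterm : ∀ (j k : Fin N),
          ‖Complex.exp ((z * (((2:ℝ)⁻¹ : ℝ) : ℂ)) * ((w j k : ℝ) : ℂ)) * M j k‖ ≤ ‖M j k‖ := by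
        intro j k
        rw [norm_mul, hnorm_exp]
        have hre : (z * (((2:ℝ)⁻¹ : ℝ) : ℂ)).re = z.re * (2:ℝ)⁻¹ := by
          simp [Complex.mul_re]
        rw [hre]
        have hexp1 : Real.exp (z.re * (2:ℝ)⁻¹ * w j k) ≤ 1 := by
          rw [Real.exp_le_one_iff]
          have h0 : 0 ≤ z.re * (2:ℝ)⁻¹ := mul_nonneg hzre.1 (by norm_num)
          exact mul_nonpos_of_nonneg_of_nonpos h0 (hw_nonpos j k)
        calc Real.exp (z.re * (2:ℝ)⁻¹ * w j k) * ‖M j k‖ ≤ 1 * ‖M j k‖ :=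
              mul_le_mul_of_nonneg_right hexp1 (norm_nonneg _)
          _ = ‖M j k‖ := one_mul _
      calc ‖G z‖ ≤ ∑ j, ‖∑ k, Complex.exp ((z * (((2:ℝ)⁻¹ : ℝ) : ℂ)) * ((w j k : ℝ) : ℂ)) * M j k‖ := by
            simp only [hG_def, hF_def]
            exact norm_sum_le _ _
        _ ≤ ∑ j, ∑ k, ‖Complex.exp ((z * (((2:ℝ)⁻¹ : ℝ) : ℂ)) * ((w j k : ℝ) : ℂ)) * M j k‖ :=
            Finset.sum_le_sum fun j _ => norm_sum_le _ _
        _ ≤ ∑ j, ∑ k, ‖M j k‖ :=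
            Finset.sum_le_sum fun j _ => Finset.sum_le_sum fun k _ => hterm j k
    have hB : BddAbove ((norm ∘ G) '' Complex.HadamardThreeLines.verticalClosedStrip 0 1) := by
      refine ⟨∑ j, ∑ k, ‖M j k‖, ?_⟩
      rintro v ⟨zz, hzz, rfl⟩
      exact hGbound zz hzz
    have hG0 : ∀ z ∈ Complex.re ⁻¹' {(0:ℝ)}, ‖G z‖ ≤ 1 := by
      intro z hz
      refine hbound0 _ ?_
      have h1 : z.re = 0 := hz
      simp [Complex.mul_re, h1]
    have hG1 : ∀ z ∈ Complex.re ⁻¹' {(1:ℝ)}, ‖G z‖ ≤ c := by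
      intro z hz
      refine hbound1 _ ?_
      have h1 : z.re = 1 := hz
      rw [show (z * (((2:ℝ)⁻¹ : ℝ) : ℂ)).re = z.re * (2:ℝ)⁻¹ by simp [Complex.mul_re], h1]
      norm_num
    have hmem : ((2*t : ℝ) : ℂ) ∈ Complex.HadamardThreeLines.verticalClosedStrip 0 1 := by
      simp only [Complex.HadamardThreeLines.verticalClosedStrip, Set.mem_preimage,
        Complex.ofReal_re, Set.mem_Icc]
      constructor
      · linarith [ht.1]
      · linarith [ht.2]
    have hmain := Complex.HadamardThreeLines.norm_le_interp_of_mem_verticalClosedStrip₀₁'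
      G hmem hGd hB hG0 hG1
    have hGt : G ((2*t : ℝ) : ℂ) = F (t : ℂ) := by
      simp only [hG_def]
      congr 1
      push_cast
      ring
    rw [hGt, Complex.ofReal_re, Real.one_rpow, one_mul] at hmain
    calc ‖F (t:ℂ)‖ ≤ c ^ (2*t) := hmain
      _ = Real.exp (2 * Real.log c * t) := by
          rw [Real.rpow_def_of_pos hcpos]
          congr 1
          ring
  -- derivative comparison
  set D : ℂ := ∑ j, ∑ k, ((w j k : ℝ) : ℂ) * M j k with hD_def
  have hphi_deriv : HasDerivAt (fun t : ℝ => Real.exp (2 * Real.log c * t) - (F (t:ℂ)).re)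
      (2 * Real.log c - D.re) 0 := by
    have hexp : HasDerivAt (fun t : ℝ => Real.exp (2 * Real.log c * t)) (2 * Real.log c) 0 := by
      have h1 : HasDerivAt (fun t : ℝ => 2 * Real.log c * t) (2 * Real.log c) 0 := by
        simpa using (hasDerivAt_id (0 : ℝ)).const_mul (2 * Real.log c)
      have h2 := h1.exp
      simpa using h2
    have hre : HasDerivAt (fun t : ℝ => (F (t:ℂ)).re) D.re 0 := by
      have h0 : HasDerivAt F D (((0:ℝ) : ℂ)) := by
        rw [Complex.ofReal_zero]; exact hFderiv
      exact h0.real_of_complex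
    exact hexp.sub hre
  have hfinal : 0 ≤ 2 * Real.log c - D.re := by
    refine aux_deriv_nonneg ?_ hphi_deriv ?_
    · show Real.exp (2 * Real.log c * 0) - (F ((0:ℝ):ℂ)).re = 0
      rw [Complex.ofReal_zero, hF0]
      norm_num
    · intro t ht
      have h1 := hinterp t ht
      have h2 : (F (t:ℂ)).re ≤ ‖F (t:ℂ)‖ := Complex.re_le_norm _
      linarith
  have hDre' : D.re = ∑ j, b j ^ 2 * Real.log (b j ^ 2) + ∑ k, a k ^ 2 * Real.log (a k ^ 2) := by
    rw [hDre]; exact Complex.ofReal_re _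
  rw [hDre'] at hfinal
  linarith
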